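/- The interval family used in the FPSPACE-hardness construction for LipIVP covers [0,1): For each binary string v of length ℓ with value v̄ ∈ {0, …, 2^ℓ − 1} (reading v as an integer in binary, leading zeros allowed), set c_v = 1 − 2^(−ℓ) + (2·v̄ + 1)/2^(2ℓ+2), l⁻_v = c_v − 2^(−(2ℓ+2)), and l⁺_v = c_v + 2^(−(2ℓ+2)). Then (a) the union over all binary strings v of the closed intervals [l⁻_v, l⁺_v] equals [0,1), and (b) for any two distinct binary strings v ≠ v', the open intervals (l⁻_v, l⁺_v) and (l⁻_{v'}, l⁺_{v'}) are disjoint. -/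

import Mathlib

open Set

/-- The natural number obtained by reading a binary string (a list of Booleans,
most significant bit first) as an integer in binary notation. -/
def binVal : List Bool → ℕ
  | [] => 0
  | b :: rest => (if b then 1 else 0) * 2 ^ rest.length + binVal rest

/-- The centre `c_v` of the interval associated with the binary string `v`. -/
noncomputable def cOf (v : List Bool) : ℝ :=
  1 - 1 / 2 ^ v.length + (2 * (binVal v : ℝ) + 1) / 2 ^ (2 * v.length + 2)

/-- The left endpoint `l⁻_v`. -/
noncomputable def lMinus (v : List Bool) : ℝ := cOf v - 1 / 2 ^ (2 * v.length + 2)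

/-- The right endpoint `l⁺_v`. -/
noncomputable def lPlus (v : List Bool) : ℝ := cOf v + 1 / 2 ^ (2 * v.length + 2)

lemma binVal_lt (v : List Bool) : binVal v < 2 ^ v.length := by
  induction v with
  | nil => simp [binVal]
  | cons b r ih =>
    simp only [binVal, List.length_cons, pow_succ]
    cases b <;> simp <;> omega

lemma binVal_inj : ∀ v w : List Bool, v.length = w.length → binVal v = binVal w → v = w := by
  intro v
  induction v with
  | nil => intro w h _; cases w <;> simp_all
  | cons b r ih =>
    intro w h hv
    cases w with
    | nil => simp at h
    | cons b' r' =>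
      simp only [List.length_cons, add_left_inj] at h
      have h1 := binVal_lt r
      have h2 := binVal_lt r'
      simp only [binVal, h] at hv
      have hbb : b = b' := by
        cases b <;> cases b' <;> simp_all <;> omega
      subst hbb
      have : binVal r = binVal r' := by omega
      rw [ih r' h this]

def toBits : ℕ → ℕ → List Bool
  | 0, _ => []
  | (l+1), n => (decide (2^l ≤ n)) :: toBits l (n % 2^l)

lemma toBits_length (l n : ℕ) : (toBits l n).length = l := by
  induction l generalizing n with
  | zero => rfl
  | succ l ih => simp [toBits, ih]

lemma binVal_toBits (l n : ℕ) (h : n < 2 ^ l) : binVal (toBits l n) = n := by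
  induction l generalizing n with
  | zero => interval_cases n; rfl
  | succ l ih =>
    simp only [toBits, binVal, toBits_length]
    have h2 : n % 2 ^ l < 2 ^ l := Nat.mod_lt _ (Nat.pow_pos (by norm_num))
    rw [ih _ h2]
    rw [pow_succ] at h
    by_cases hc : 2 ^ l ≤ n
    · rw [decide_eq_true hc]
      rw [Nat.mod_eq_sub_mod hc, Nat.mod_eq_of_lt (by omega)]
      simp only [if_true]
      omega
    · rw [decide_eq_false hc]
      rw [Nat.mod_eq_of_lt (by omega)]
      simp

lemma lMinus_eq (v : List Bool) :
    lMinus v = 1 - 1 / 2 ^ v.length + (binVal v : ℝ) / 2 ^ (2 * v.length + 1) := by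
  unfold lMinus cOf
  have h1 : (2:ℝ) ^ (2 * v.length + 2) = 2 ^ (2 * v.length + 1) * 2 := by ring
  rw [h1]; field_simp; ring

lemma lPlus_eq (v : List Bool) :
    lPlus v = 1 - 1 / 2 ^ v.length + ((binVal v : ℝ) + 1) / 2 ^ (2 * v.length + 1) := by
  unfold lPlus cOf
  have h1 : (2:ℝ) ^ (2 * v.length + 2) = 2 ^ (2 * v.length + 1) * 2 := by ring
  rw [h1]; field_simp; ring

lemma lMinus_nonneg (v : List Bool) : 0 ≤ lMinus v := by
  rw [lMinus_eq]
  have h1 : (1:ℝ) / 2 ^ v.length ≤ 1 := by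
    rw [div_le_one (by positivity)]
    exact one_le_pow₀ (by norm_num)
  have h2 : (0:ℝ) ≤ (binVal v : ℝ) / 2 ^ (2 * v.length + 1) := by positivity
  linarith

lemma lPlus_le (v : List Bool) : lPlus v ≤ 1 - 1 / 2 ^ (v.length + 1) := by
  rw [lPlus_eq]
  have hn : (binVal v : ℝ) + 1 ≤ 2 ^ v.length := by
    have := binVal_lt v
    have : (binVal v : ℝ) + 1 ≤ ((2 ^ v.length : ℕ) : ℝ) := by
      exact_mod_cast this
    simpa using this
  have e1 : (2:ℝ) ^ (2 * v.length + 1) = 2 ^ v.length * 2 ^ (v.length + 1) := by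
    rw [← pow_add]; ring_nf
  have e2 : (1:ℝ) / 2 ^ v.length = 2 * (1 / 2 ^ (v.length + 1)) := by
    rw [pow_succ]; field_simp
  have hp : (0:ℝ) < 2 ^ (v.length + 1) := by positivity
  have key : ((binVal v : ℝ) + 1) / 2 ^ (2 * v.length + 1) ≤ 1 / 2 ^ (v.length + 1) := by
    rw [div_le_div_iff₀ (by positivity) (by positivity), e1]
    nlinarith
  rw [e2]
  linarith

lemma lMinus_ge (v : List Bool) : 1 - 1 / 2 ^ v.length ≤ lMinus v := by
  rw [lMinus_eq]
  have : (0:ℝ) ≤ (binVal v : ℝ) / 2 ^ (2 * v.length + 1) := by positivity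
  linarith

lemma disj_of_le {a b c d : ℝ} (h : b ≤ c) :
    Disjoint (Ioo a b) (Ioo c d) := by
  rw [Set.disjoint_left]
  rintro x ⟨_, hb⟩ ⟨hc, _⟩
  linarith

lemma cross_le {v v' : List Bool} (h : v.length < v'.length) :
    lPlus v ≤ lMinus v' := by
  have h1 := lPlus_le v
  have h2 := lMinus_ge v'
  have h3 : (1:ℝ) / 2 ^ v'.length ≤ 1 / 2 ^ (v.length + 1) := by
    apply one_div_le_one_div_of_le (by positivity)
    exact pow_le_pow_right₀ (by norm_num) (by omega)
  linarith

/-- The interval family used in the FPSPACE-hardness construction for `LipIVP`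
covers `[0,1)`, and the corresponding open intervals are pairwise disjoint. -/
theorem lipivp_interval_family_covers :
    (⋃ v : List Bool, Icc (lMinus v) (lPlus v)) = Ico (0:ℝ) 1 ∧
    ∀ v v' : List Bool, v ≠ v' →
      Disjoint (Ioo (lMinus v) (lPlus v)) (Ioo (lMinus v') (lPlus v')) := by
  constructor
  · apply Set.eq_of_subset_of_subset
    · intro x hx
      simp only [mem_iUnion, mem_Icc] at hx
      obtain ⟨v, h1, h2⟩ := hx
      have h3 := lMinus_nonneg v
      have h4 := lPlus_le v
      have h5 : (0:ℝ) < 1 / 2 ^ (v.length + 1) := by positivity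
      exact ⟨by linarith, by linarith⟩
    · rintro x ⟨hx0, hx1⟩
      classical
      have hpos : (0:ℝ) < 1 - x := by linarith
      have hex : ∃ k : ℕ, (1:ℝ) / 2 ^ k < 1 - x := by
        obtain ⟨k, hk⟩ := exists_pow_lt_of_lt_one hpos (by norm_num : (1:ℝ)/2 < 1)
        exact ⟨k, by rwa [div_pow, one_pow] at hk⟩
      set k := Nat.find hex with hkdef
      have hk1 : (1:ℝ) / 2 ^ k < 1 - x := Nat.find_spec hex
      have hkne : k ≠ 0 := by
        intro h0
        rw [h0] at hk1
        norm_num at hk1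
        linarith
      obtain ⟨l, hl⟩ : ∃ l, k = l + 1 := ⟨k - 1, by omega⟩
      have hk2 : ¬ ((1:ℝ) / 2 ^ l < 1 - x) := Nat.find_min hex (by omega)
      push_neg at hk2
      rw [hl] at hk1
      -- so 1 - 1/2^l ≤ x < 1 - 1/2^(l+1)
      have hxl : 1 - 1 / 2 ^ l ≤ x := by linarith
      have hxr : x < 1 - 1 / 2 ^ (l + 1) := by linarith
      set a : ℝ := x - (1 - 1 / 2 ^ l) with hadef
      have ha0 : 0 ≤ a := by simp only [hadef]; linarith
      have ha1 : a < 1 / 2 ^ l - 1 / 2 ^ (l + 1) := by simp only [hadef]; linarith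
      set m : ℤ := ⌊a * 2 ^ (2 * l + 1)⌋ with hmdef
      have hm0 : 0 ≤ m := Int.floor_nonneg.2 (by positivity)
      set n : ℕ := m.toNat with hndef
      have hnm : (n : ℝ) = (m : ℝ) := by
        rw [hndef]; exact_mod_cast Int.toNat_of_nonneg hm0
      have hfl : (n : ℝ) ≤ a * 2 ^ (2 * l + 1) := by
        rw [hnm]; exact Int.floor_le _
      have hfu : a * 2 ^ (2 * l + 1) < (n : ℝ) + 1 := by
        rw [hnm]; exact Int.lt_floor_add_one _
      have hpow : (2:ℝ) ^ (2 * l + 1) = 2 ^ l * 2 ^ (l + 1) := by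
        rw [← pow_add]; ring_nf
      have hp1 : (0:ℝ) < 2 ^ l := by positivity
      have hp2 : (0:ℝ) < 2 ^ (l + 1) := by positivity
      have hp3 : (0:ℝ) < 2 ^ (2 * l + 1) := by positivity
      have hnlt : n < 2 ^ l := by
        have : (n : ℝ) < 2 ^ l := by
          calc (n : ℝ) ≤ a * 2 ^ (2 * l + 1) := hfl
            _ < (1 / 2 ^ l - 1 / 2 ^ (l + 1)) * 2 ^ (2 * l + 1) := by
                apply mul_lt_mul_of_pos_right ha1 hp3
            _ = 2 ^ l := by rw [hpow]; field_simp; ring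
        exact_mod_cast this
      refine mem_iUnion.2 ⟨toBits l n, ?_, ?_⟩
      · rw [lMinus_eq, toBits_length, binVal_toBits l n hnlt]
        have : (n : ℝ) / 2 ^ (2 * l + 1) ≤ a := by
          rw [div_le_iff₀ hp3]; linarith
        simp only [hadef] at this
        linarith
      · rw [lPlus_eq, toBits_length, binVal_toBits l n hnlt]
        have : a ≤ ((n : ℝ) + 1) / 2 ^ (2 * l + 1) := by
          rw [le_div_iff₀ hp3]; linarith
        simp only [hadef] at this
        linarith
  · intro v v' hne
    rcases lt_trichotomy v.length v'.length with h | h | h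
    · exact disj_of_le (cross_le h)
    · have hval : binVal v ≠ binVal v' := fun he => hne (binVal_inj v v' h he)
      have hp3 : (0:ℝ) < 2 ^ (2 * v'.length + 1) := by positivity
      rcases lt_or_gt_of_ne hval with hv | hv
      · apply disj_of_le
        rw [lPlus_eq, lMinus_eq, h]
        have hc : (binVal v : ℝ) + 1 ≤ (binVal v' : ℝ) := by exact_mod_cast hv
        have : ((binVal v : ℝ) + 1) / 2 ^ (2 * v'.length + 1)
            ≤ (binVal v' : ℝ) / 2 ^ (2 * v'.length + 1) := by
          gcongr
        linarith
      · apply Disjoint.symm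
        apply disj_of_le
        rw [lPlus_eq, lMinus_eq, h]
        have hc : (binVal v' : ℝ) + 1 ≤ (binVal v : ℝ) := by exact_mod_cast hv
        have : ((binVal v' : ℝ) + 1) / 2 ^ (2 * v'.length + 1)
            ≤ (binVal v : ℝ) / 2 ^ (2 * v'.length + 1) := by
          gcongr
        linarith
    · exact (disj_of_le (cross_le h)).symm
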